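/- A function f : (k+1)^V → ℝ is k-submodular if and only if it is both pairwise monotone and orthant submodular. -/

import Mathlib

def ksup {k : ℕ} (i i' : Fin (k+1)) : Fin (k+1) :=
  if i = 0 ∨ i' = 0 ∨ i = i' then max i i' else 0

def kinf {k : ℕ} (i i' : Fin (k+1)) : Fin (k+1) :=
  if i = 0 ∨ i' = 0 ∨ i = i' then min i i' else 0

def vsup {k : ℕ} {V : Type*} (x y : V → Fin (k+1)) : V → Fin (k+1) :=
  fun j => ksup (x j) (y j)

def vinf {k : ℕ} {V : Type*} (x y : V → Fin (k+1)) : V → Fin (k+1) :=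
  fun j => kinf (x j) (y j)

/-- The partial order `x ≤ y ↔ x ⊓ y = x`. -/
def kle {k : ℕ} {V : Type*} (x y : V → Fin (k+1)) : Prop :=
  vinf x y = x

section basic
variable {k : ℕ}

lemma kinf_self (i : Fin (k+1)) : kinf i i = i := by simp [kinf]

lemma kinf_zero_left (i : Fin (k+1)) : kinf 0 i = 0 := by
  simp [kinf, min_eq_left (Fin.zero_le i)]

lemma kinf_zero_right (i : Fin (k+1)) : kinf i 0 = 0 := by
  simp [kinf, min_eq_right (Fin.zero_le i)]

lemma ksup_self (i : Fin (k+1)) : ksup i i = i := by simp [ksup]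

lemma ksup_zero_left (i : Fin (k+1)) : ksup 0 i = i := by
  simp [ksup, max_eq_right (Fin.zero_le i)]

lemma ksup_zero_right (i : Fin (k+1)) : ksup i 0 = i := by
  simp [ksup, max_eq_left (Fin.zero_le i)]

lemma ksup_conflict {i i' : Fin (k+1)} (h : i ≠ 0) (h' : i' ≠ 0) (hne : i ≠ i') :
    ksup i i' = 0 := by simp [ksup, h, h', hne]

lemma kinf_conflict {i i' : Fin (k+1)} (h : i ≠ 0) (h' : i' ≠ 0) (hne : i ≠ i') :
    kinf i i' = 0 := by simp [kinf, h, h', hne]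

variable {V : Type*}

lemma kle_iff {x y : V → Fin (k+1)} : kle x y ↔ ∀ j, kinf (x j) (y j) = x j := by
  constructor
  · intro h j; exact congrFun h j
  · intro h; funext j; exact h j

lemma kle_zero {x y : V → Fin (k+1)} (h : kle x y) {j : V} (hy : y j = 0) :
    x j = 0 := by
  have := (kle_iff.mp h) j
  rw [hy, kinf_zero_right] at this
  exact this.symm

lemma ksup_of_kle {x y : V → Fin (k+1)} (h : kle x y) (j : V) :
    ksup (x j) (y j) = y j := by
  have hj := (kle_iff.mp h) j
  by_cases hx : x j = 0
  · rw [hx, ksup_zero_left]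
  · by_cases hy : y j = 0
    · rw [hy, kinf_zero_right] at hj; exact absurd hj.symm hx
    · by_cases he : x j = y j
      · rw [he, ksup_self]
      · rw [kinf_conflict hx hy he] at hj; exact absurd hj.symm hx
end basic

section patch
variable {k : ℕ} {V : Type*} [DecidableEq V]

/-- Update `z` to agree with `u` on the coordinates in `L`. -/
def patch (z : V → Fin (k+1)) (L : List V) (u : V → Fin (k+1)) : V → Fin (k+1) :=
  L.foldr (fun j acc => Function.update acc j (u j)) z

@[simp] lemma patch_nil (z u : V → Fin (k+1)) : patch z [] u = z := rfl

lemma patch_cons (z u : V → Fin (k+1)) (j : V) (L : List V) :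
    patch z (j :: L) u = Function.update (patch z L u) j (u j) := rfl

lemma patch_apply (z u : V → Fin (k+1)) (L : List V) (t : V) :
    patch z L u t = if t ∈ L then u t else z t := by
  induction L with
  | nil => simp
  | cons j L ih =>
    rw [patch_cons]
    by_cases h : t = j
    · subst h; simp
    · rw [Function.update_of_ne h, ih]
      simp [List.mem_cons, h]

lemma patch_update_comm (z u : V → Fin (k+1)) (L : List V) (j : V) (v : Fin (k+1))
    (hj : j ∉ L) :
    patch (Function.update z j v) L u = Function.update (patch z L u) j v := by
  funext t
  by_cases h : t = j
  · subst h
    rw [patch_apply, if_neg hj, Function.update_self, Function.update_self]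
  · rw [Function.update_of_ne h, patch_apply, patch_apply]
    by_cases ht : t ∈ L
    · simp [ht]
    · simp [ht, Function.update_of_ne h]

lemma kle_patch {z w : V → Fin (k+1)} (h : kle z w) (L : List V) (u : V → Fin (k+1)) :
    kle (patch z L u) (patch w L u) := by
  rw [kle_iff]
  intro t
  rw [patch_apply, patch_apply]
  by_cases ht : t ∈ L
  · simp [ht, kinf_self]
  · simp only [ht, if_false]
    exact (kle_iff.mp h) t

end patch

/-- `f` is `k`-submodular. -/
def KSubmodular {k : ℕ} {V : Type*} (f : (V → Fin (k+1)) → ℝ) : Prop :=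
  ∀ x y, f (vsup x y) + f (vinf x y) ≤ f x + f y

/-- The marginal gain `Δ_{j,i} f(x) = f(x + i e_j) − f(x)`. -/
def marginal {k : ℕ} {V : Type*} [DecidableEq V]
    (f : (V → Fin (k+1)) → ℝ) (j : V) (i : Fin (k+1)) (x : V → Fin (k+1)) : ℝ :=
  f (Function.update x j i) - f x

/-- Pairwise monotonicity. -/
def PairwiseMonotone {k : ℕ} {V : Type*} [DecidableEq V]
    (f : (V → Fin (k+1)) → ℝ) : Prop :=
  ∀ (x : V → Fin (k+1)) (j : V) (i i' : Fin (k+1)),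
    x j = 0 → i ≠ 0 → i' ≠ 0 → i ≠ i' →
      0 ≤ marginal f j i x + marginal f j i' x

/-- Orthant submodularity. -/
def OrthantSubmodular {k : ℕ} {V : Type*} [DecidableEq V]
    (f : (V → Fin (k+1)) → ℝ) : Prop :=
  ∀ (x y : V → Fin (k+1)) (j : V) (i : Fin (k+1)),
    i ≠ 0 → kle x y → y j = 0 →
      marginal f j i y ≤ marginal f j i x

section chains
variable {k : ℕ} {V : Type*} [DecidableEq V] {f : (V → Fin (k+1)) → ℝ}

/-- Chain lemma: patching a larger point gains less. -/
lemma chain_le (hOS : OrthantSubmodular f) :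
    ∀ (L : List V), L.Nodup → ∀ (z w u : V → Fin (k+1)), kle z w →
      (∀ j ∈ L, w j = 0) → (∀ j ∈ L, u j ≠ 0) →
      f (patch w L u) - f w ≤ f (patch z L u) - f z := by
  intro L
  induction L with
  | nil => intro _ z w u _ _ _; simp
  | cons j L ih =>
    intro hnd z w u hzw hw hu
    have hjL : j ∉ L := (List.nodup_cons.mp hnd).1
    have hndL : L.Nodup := (List.nodup_cons.mp hnd).2
    have h1 : f (patch w L u) - f w ≤ f (patch z L u) - f z :=
      ih hndL z w u hzw (fun t ht => hw t (List.mem_cons_of_mem _ ht))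
        (fun t ht => hu t (List.mem_cons_of_mem _ ht))
    have hkle : kle (patch z L u) (patch w L u) := kle_patch hzw L u
    have hwj : (patch w L u) j = 0 := by
      rw [patch_apply, if_neg hjL]; exact hw j (List.mem_cons_self)
    have h2 : marginal f j (u j) (patch w L u) ≤ marginal f j (u j) (patch z L u) :=
      hOS _ _ j (u j) (hu j (List.mem_cons_self)) hkle hwj
    rw [patch_cons, patch_cons]
    unfold marginal at h2
    linarith

/-- Conflict lemma. -/
lemma conflict_le (hPM : PairwiseMonotone f) (hOS : OrthantSubmodular f) :
    ∀ (L : List V), L.Nodup → ∀ (a b c xv yv : V → Fin (k+1)), kle a c → kle b c →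
      (∀ j ∈ L, c j = 0) →
      (∀ j ∈ L, xv j ≠ 0 ∧ yv j ≠ 0 ∧ xv j ≠ yv j) →
      0 ≤ (f (patch a L xv) - f a) + (f (patch b L yv) - f b) := by
  intro L
  induction L with
  | nil => intro _ a b c xv yv _ _ _ _; simp
  | cons j L ih =>
    intro hnd a b c xv yv hac hbc hc hxy
    have hjL : j ∉ L := (List.nodup_cons.mp hnd).1
    have hndL : L.Nodup := (List.nodup_cons.mp hnd).2
    have hcj : c j = 0 := hc j (List.mem_cons_self)
    obtain ⟨hxj, hyj, hne⟩ := hxy j (List.mem_cons_self)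
    have haj : a j = 0 := kle_zero hac hcj
    -- c₁ = patch c L xv : the common upper bound at step j
    set c₁ := patch c L xv with hc₁
    have hc₁j : c₁ j = 0 := by rw [hc₁, patch_apply, if_neg hjL]; exact hcj
    have hklea : kle (patch a L xv) c₁ := kle_patch hac L xv
    have hkleb : kle b c₁ := by
      rw [kle_iff]; intro t
      rw [hc₁, patch_apply]
      by_cases ht : t ∈ L
      · have hbt : b t = 0 := kle_zero hbc (hc t (List.mem_cons_of_mem _ ht))
        rw [if_pos ht, hbt, kinf_zero_left]
      · rw [if_neg ht]; exact (kle_iff.mp hbc) t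
    -- the two orthant-submodularity estimates
    have hOSa : marginal f j (xv j) c₁ ≤ marginal f j (xv j) (patch a L xv) :=
      hOS _ _ j (xv j) hxj hklea hc₁j
    have hOSb : marginal f j (yv j) c₁ ≤ marginal f j (yv j) b :=
      hOS _ _ j (yv j) hyj hkleb hc₁j
    -- pairwise monotonicity at c₁
    have hPMc : 0 ≤ marginal f j (xv j) c₁ + marginal f j (yv j) c₁ :=
      hPM c₁ j (xv j) (yv j) hc₁j hxj hyj hne
    -- inductive step with b' = update b j (yv j), c' = update c j (yv j)
    set b' := Function.update b j (yv j) with hb'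
    set c' := Function.update c j (yv j) with hc'
    have hac' : kle a c' := by
      rw [kle_iff]; intro t
      by_cases ht : t = j
      · subst ht; rw [hc', Function.update_self, haj, kinf_zero_left]
      · rw [hc', Function.update_of_ne ht]; exact (kle_iff.mp hac) t
    have hbc' : kle b' c' := by
      rw [kle_iff]; intro t
      by_cases ht : t = j
      · subst ht; rw [hb', hc', Function.update_self, Function.update_self, kinf_self]
      · rw [hb', hc', Function.update_of_ne ht, Function.update_of_ne ht]
        exact (kle_iff.mp hbc) t
    have hc'0 : ∀ t ∈ L, c' t = 0 := by
      intro t ht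
      have : t ≠ j := fun h => hjL (h ▸ ht)
      rw [hc', Function.update_of_ne this]
      exact hc t (List.mem_cons_of_mem _ ht)
    have hIH : 0 ≤ (f (patch a L xv) - f a) + (f (patch b' L yv) - f b') :=
      ih hndL a b' c' xv yv hac' hbc' hc'0
        (fun t ht => hxy t (List.mem_cons_of_mem _ ht))
    -- reassembling
    have hpb : patch b (j :: L) yv = patch b' L yv := by
      rw [hb', patch_update_comm _ _ _ _ _ hjL, patch_cons]
    rw [patch_cons, hpb]
    have e1 : f (Function.update (patch a L xv) j (xv j)) - f a
        = marginal f j (xv j) (patch a L xv) + (f (patch a L xv) - f a) := by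
      unfold marginal; ring
    have e2 : f (patch b' L yv) - f b
        = (f (patch b' L yv) - f b') + marginal f j (yv j) b := by
      rw [hb']; unfold marginal; ring
    rw [e1, e2]
    linarith

end chains

theorem ksubmodular_iff {k : ℕ} (hk : 0 < k) {V : Type*} [DecidableEq V]
    [Fintype V] (f : (V → Fin (k+1)) → ℝ) :
    KSubmodular f ↔ PairwiseMonotone f ∧ OrthantSubmodular f := by
  constructor
  · intro hsub
    constructor
    · -- pairwise monotone
      intro x j i i' hxj hi hi' hne
      have hs : vsup (Function.update x j i) (Function.update x j i') = x := by
        funext t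
        by_cases ht : t = j
        · subst ht
          simp only [vsup, Function.update_self]
          rw [ksup_conflict hi hi' hne, hxj]
        · simp only [vsup, Function.update_of_ne ht]
          exact ksup_self _
      have hv : vinf (Function.update x j i) (Function.update x j i') = x := by
        funext t
        by_cases ht : t = j
        · subst ht
          simp only [vinf, Function.update_self]
          rw [kinf_conflict hi hi' hne, hxj]
        · simp only [vinf, Function.update_of_ne ht]
          exact kinf_self _
      have := hsub (Function.update x j i) (Function.update x j i')
      rw [hs, hv] at this
      unfold marginal
      linarith
    · -- orthant submodular
      intro x y j i hi hxy hyj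
      have hxj : x j = 0 := kle_zero hxy hyj
      have hs : vsup (Function.update x j i) y = Function.update y j i := by
        funext t
        by_cases ht : t = j
        · subst ht
          simp only [vsup, Function.update_self]
          rw [hyj, ksup_zero_right]
        · simp only [vsup, Function.update_of_ne ht]
          exact ksup_of_kle hxy t
      have hv : vinf (Function.update x j i) y = x := by
        funext t
        by_cases ht : t = j
        · subst ht
          simp only [vinf, Function.update_self]
          rw [hyj, kinf_zero_right, hxj]
        · simp only [vinf, Function.update_of_ne ht]
          exact (kle_iff.mp hxy) t
      have := hsub (Function.update x j i) y
      rw [hs, hv] at this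
      unfold marginal
      linarith
  · rintro ⟨hPM, hOS⟩
    intro x y
    set p := vinf x y with hp
    set q := vsup x y with hq
    set LA := (Finset.univ.filter (fun j => x j ≠ 0 ∧ y j = 0)).toList with hLA
    set LB := (Finset.univ.filter (fun j => y j ≠ 0 ∧ x j = 0)).toList with hLB
    set LD := (Finset.univ.filter (fun j => x j ≠ 0 ∧ y j ≠ 0 ∧ x j ≠ y j)).toList with hLD
    have mA : ∀ t, t ∈ LA ↔ (x t ≠ 0 ∧ y t = 0) := by
      intro t; rw [hLA, Finset.mem_toList, Finset.mem_filter]; simp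
    have mB : ∀ t, t ∈ LB ↔ (y t ≠ 0 ∧ x t = 0) := by
      intro t; rw [hLB, Finset.mem_toList, Finset.mem_filter]; simp
    have mD : ∀ t, t ∈ LD ↔ (x t ≠ 0 ∧ y t ≠ 0 ∧ x t ≠ y t) := by
      intro t; rw [hLD, Finset.mem_toList, Finset.mem_filter]; simp
    have ndA : LA.Nodup := Finset.nodup_toList _
    have ndB : LB.Nodup := Finset.nodup_toList _
    have ndD : LD.Nodup := Finset.nodup_toList _
    -- pointwise values of p and q
    have hpq_eq : ∀ t, t ∉ LA → t ∉ LB → t ∉ LD → x t = y t := by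
      intro t hA hB hD
      rw [mA] at hA; rw [mB] at hB; rw [mD] at hD
      by_cases hx0 : x t = 0
      · by_cases hy0 : y t = 0
        · rw [hx0, hy0]
        · exact absurd ⟨hy0, hx0⟩ hB
      · by_cases hy0 : y t = 0
        · exact absurd ⟨hx0, hy0⟩ hA
        · by_contra hne
          exact hD ⟨hx0, hy0, hne⟩
    have hpA' : ∀ t ∈ LA, p t = 0 ∧ q t = x t := by
      intro t ht
      obtain ⟨hx0, hy0⟩ := (mA t).mp ht
      constructor
      · rw [hp]; show kinf (x t) (y t) = 0; rw [hy0, kinf_zero_right]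
      · rw [hq]; show ksup (x t) (y t) = x t; rw [hy0, ksup_zero_right]
    have hpB' : ∀ t ∈ LB, p t = 0 ∧ q t = y t := by
      intro t ht
      obtain ⟨hy0, hx0⟩ := (mB t).mp ht
      constructor
      · rw [hp]; show kinf (x t) (y t) = 0; rw [hx0, kinf_zero_left]
      · rw [hq]; show ksup (x t) (y t) = y t; rw [hx0, ksup_zero_left]
    have hpD' : ∀ t ∈ LD, p t = 0 ∧ q t = 0 := by
      intro t ht
      obtain ⟨hx0, hy0, hne⟩ := (mD t).mp ht
      exact ⟨kinf_conflict hx0 hy0 hne, ksup_conflict hx0 hy0 hne⟩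
    have hpE : ∀ t, t ∉ LA → t ∉ LB → t ∉ LD → p t = x t ∧ q t = x t := by
      intro t hA hB hD
      have he := hpq_eq t hA hB hD
      constructor
      · rw [hp]; show kinf (x t) (y t) = x t; rw [← he, kinf_self]
      · rw [hq]; show ksup (x t) (y t) = x t; rw [← he, ksup_self]
    -- disjointness
    have hAB : ∀ t ∈ LA, t ∉ LB := by
      intro t ht hB
      exact ((mB t).mp hB).1 ((mA t).mp ht).2
    have hAD : ∀ t ∈ LA, t ∉ LD := by
      intro t ht hD
      exact ((mD t).mp hD).2.1 ((mA t).mp ht).2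
    have hBA : ∀ t ∈ LB, t ∉ LA := by
      intro t ht hA
      exact ((mA t).mp hA).1 ((mB t).mp ht).2
    have hBD : ∀ t ∈ LB, t ∉ LD := by
      intro t ht hD
      exact ((mD t).mp hD).1 ((mB t).mp ht).2
    have hDA : ∀ t ∈ LD, t ∉ LA := fun t ht hA => hAD t hA ht
    have hDB : ∀ t ∈ LD, t ∉ LB := fun t ht hB => hBD t hB ht
    set pA := patch p LA x with hpAdef
    set pB := patch p LB y with hpBdef
    -- identifications
    have hxid : patch pA LD x = x := by
      funext t
      rw [patch_apply]
      by_cases hD : t ∈ LD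
      · rw [if_pos hD]
      · rw [if_neg hD, hpAdef, patch_apply]
        by_cases hA : t ∈ LA
        · rw [if_pos hA]
        · rw [if_neg hA]
          by_cases hB : t ∈ LB
          · rw [(hpB' t hB).1, ((mB t).mp hB).2]
          · exact (hpE t hA hB hD).1
    have hyid : patch pB LD y = y := by
      funext t
      rw [patch_apply]
      by_cases hD : t ∈ LD
      · rw [if_pos hD]
      · rw [if_neg hD, hpBdef, patch_apply]
        by_cases hB : t ∈ LB
        · rw [if_pos hB]
        · rw [if_neg hB]
          by_cases hA : t ∈ LA
          · rw [(hpA' t hA).1, ((mA t).mp hA).2]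
          · rw [(hpE t hA hB hD).1, hpq_eq t hA hB hD]
    have hqid : patch pA LB y = q := by
      funext t
      rw [patch_apply]
      by_cases hB : t ∈ LB
      · rw [if_pos hB, (hpB' t hB).2]
      · rw [if_neg hB, hpAdef, patch_apply]
        by_cases hA : t ∈ LA
        · rw [if_pos hA, (hpA' t hA).2]
        · rw [if_neg hA]
          by_cases hD : t ∈ LD
          · rw [(hpD' t hD).1, (hpD' t hD).2]
          · rw [(hpE t hA hB hD).1, (hpE t hA hB hD).2]
    -- kle facts
    have hppA : kle p pA := by
      rw [kle_iff]; intro t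
      rw [hpAdef, patch_apply]
      by_cases hA : t ∈ LA
      · rw [if_pos hA, (hpA' t hA).1, kinf_zero_left]
      · rw [if_neg hA, kinf_self]
    have hpA0 : ∀ t ∈ LB, pA t = 0 := by
      intro t ht
      rw [hpAdef, patch_apply, if_neg (hBA t ht)]
      exact (hpB' t ht).1
    have hchain : f (patch pA LB y) - f pA ≤ f (patch p LB y) - f p :=
      chain_le hOS LB ndB p pA y hppA hpA0 (fun t ht => ((mB t).mp ht).1)
    rw [hqid] at hchain
    -- conflict part
    have hpAq : kle pA q := by
      rw [kle_iff]; intro t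
      rw [hpAdef, patch_apply]
      by_cases hA : t ∈ LA
      · rw [if_pos hA, (hpA' t hA).2, kinf_self]
      · rw [if_neg hA]
        by_cases hB : t ∈ LB
        · rw [(hpB' t hB).1, kinf_zero_left]
        · by_cases hD : t ∈ LD
          · rw [(hpD' t hD).1, kinf_zero_left]
          · rw [(hpE t hA hB hD).1, (hpE t hA hB hD).2, kinf_self]
    have hpBq : kle pB q := by
      rw [kle_iff]; intro t
      rw [hpBdef, patch_apply]
      by_cases hB : t ∈ LB
      · rw [if_pos hB, (hpB' t hB).2, kinf_self]
      · rw [if_neg hB]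
        by_cases hA : t ∈ LA
        · rw [(hpA' t hA).1, kinf_zero_left]
        · by_cases hD : t ∈ LD
          · rw [(hpD' t hD).1, kinf_zero_left]
          · rw [(hpE t hA hB hD).1, (hpE t hA hB hD).2, kinf_self]
    have hq0 : ∀ t ∈ LD, q t = 0 := fun t ht => (hpD' t ht).2
    have hconf : 0 ≤ (f (patch pA LD x) - f pA) + (f (patch pB LD y) - f pB) :=
      conflict_le hPM hOS LD ndD pA pB q x y hpAq hpBq hq0
        (fun t ht => (mD t).mp ht)
    rw [hxid, hyid] at hconf
    have : f (patch p LB y) = f pB := by rw [hpBdef]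
    linarith [hchain, hconf, this]
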